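/- For Berglund–Hübsch data (A, q, G) and any fixed z ∈ ℂ such that q_j z + θ_j(n₁) ∉ ℤ for all 1 ≤ j ≤ d and all n₁ ∈ G, the limit lim_{t → +∞} Ell(W/G, z, it) exists in ℂ. (This is the statement that Ell has no negative powers of q at the cusp, i.e. that it is a WEAK Jacobi form.) -/

import Mathlib

/-- The Jacobi theta function
`Θ(ν, τ) = i q^{1/8} e^{−iπν}(1 − e^{2πiν}) ∏_{n≥1} (1 − q^n)(1 − q^n e^{2πiν})(1 − q^n e^{−2πiν})`
with `q = e^{2πiτ}` and `q^{1/8} = e^{iπτ/4}`. -/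
noncomputable def Theta (ν τ : ℂ) : ℂ :=
  Complex.I * Complex.exp (Real.pi * Complex.I * τ / 4) *
    Complex.exp (-(Real.pi * Complex.I * ν)) *
    (1 - Complex.exp (2 * Real.pi * Complex.I * ν)) *
    ∏' n : ℕ,
      ((1 - Complex.exp (2 * Real.pi * Complex.I * τ) ^ (n + 1)) *
        (1 - Complex.exp (2 * Real.pi * Complex.I * τ) ^ (n + 1) *
          Complex.exp (2 * Real.pi * Complex.I * ν)) *
        (1 - Complex.exp (2 * Real.pi * Complex.I * τ) ^ (n + 1) *
          Complex.exp (-(2 * Real.pi * Complex.I * ν))))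

/-- The Berglund–Hübsch elliptic genus
`Ell(W/G, z, τ) = (1/|G|) Σ_{n,n₁∈G} Π_j e^{−2πizθ_j(n)} ·
Θ((1−q_j)z − θ_j(n)τ − θ_j(n₁), τ) / Θ(q_j z + θ_j(n)τ + θ_j(n₁), τ)`,
where the group `G ⊆ ℚ^d/ℤ^d` is encoded by the finite set of its canonical
representatives with components in `[0,1)`, so that `θ_j(n) = n j`. -/
noncomputable def Ell (d : ℕ) (q : Fin d → ℚ) (G : Finset (Fin d → ℚ)) (z τ : ℂ) : ℂ :=
  (G.card : ℂ)⁻¹ *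
    ∑ n ∈ G, ∑ n₁ ∈ G, ∏ j : Fin d,
      Complex.exp (-(2 * Real.pi * Complex.I * z * (n j : ℂ))) *
        Theta ((1 - (q j : ℂ)) * z - (n j : ℂ) * τ - (n₁ j : ℂ)) τ /
        Theta ((q j : ℂ) * z + (n j : ℂ) * τ + (n₁ j : ℂ)) τ

/-- All theta-function denominators in the defining formula of `Ell` are
nonzero at `(z, τ)`. -/
def EllDenomNE (d : ℕ) (q : Fin d → ℚ) (G : Finset (Fin d → ℚ)) (z τ : ℂ) : Prop :=
  ∀ n ∈ G, ∀ n₁ ∈ G, ∀ j : Fin d,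
    Theta ((q j : ℂ) * z + (n j : ℂ) * τ + (n₁ j : ℂ)) τ ≠ 0

open Filter Complex Topology

lemma normProdSubOne {ι : Type*} (s : Finset ι) (f : ι → ℂ) (b : ι → ℝ)
    (h : ∀ i ∈ s, ‖f i - 1‖ ≤ b i) (hb : ∀ i ∈ s, 0 ≤ b i) :
    ‖(∏ i ∈ s, f i) - 1‖ ≤ (∏ i ∈ s, (1 + b i)) - 1 := by
  classical
  induction s using Finset.cons_induction with
  | empty => simp
  | cons a s hx ih =>
    rw [Finset.prod_cons, Finset.prod_cons]
    have h1 : ‖f a - 1‖ ≤ b a := h a (Finset.mem_cons_self a s)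
    have hb1 : 0 ≤ b a := hb a (Finset.mem_cons_self a s)
    have ih' : ‖(∏ i ∈ s, f i) - 1‖ ≤ (∏ i ∈ s, (1 + b i)) - 1 :=
      ih (fun i hi => h i (Finset.mem_cons_of_mem hi))
        (fun i hi => hb i (Finset.mem_cons_of_mem hi))
    have hfs : ‖∏ i ∈ s, f i‖ ≤ ∏ i ∈ s, (1 + b i) := by
      calc ‖∏ i ∈ s, f i‖ ≤ ∏ i ∈ s, ‖f i‖ := Finset.norm_prod_le _ _
        _ ≤ ∏ i ∈ s, (1 + b i) := by
            apply Finset.prod_le_prod (fun i _ => norm_nonneg _)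
            intro i hi
            have : ‖f i‖ ≤ ‖f i - 1‖ + 1 := by
              calc ‖f i‖ = ‖(f i - 1) + 1‖ := by congr 1; ring
                _ ≤ ‖f i - 1‖ + ‖(1:ℂ)‖ := norm_add_le _ _
                _ = ‖f i - 1‖ + 1 := by simp
            linarith [h i (Finset.mem_cons_of_mem hi)]
    have key : f a * ∏ i ∈ s, f i - 1 = (f a - 1) * ∏ i ∈ s, f i + ((∏ i ∈ s, f i) - 1) := by
      ring
    rw [key]
    have hP1 : (0:ℝ) ≤ ∏ i ∈ s, (1 + b i) :=
      Finset.prod_nonneg fun i hi => by linarith [hb i (Finset.mem_cons_of_mem hi)]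
    calc ‖(f a - 1) * ∏ i ∈ s, f i + ((∏ i ∈ s, f i) - 1)‖
        ≤ ‖(f a - 1) * ∏ i ∈ s, f i‖ + ‖(∏ i ∈ s, f i) - 1‖ := norm_add_le _ _
      _ = ‖f a - 1‖ * ‖∏ i ∈ s, f i‖ + ‖(∏ i ∈ s, f i) - 1‖ := by rw [norm_mul]
      _ ≤ b a * ∏ i ∈ s, (1 + b i) + ((∏ i ∈ s, (1 + b i)) - 1) := by
          gcongr
      _ = (1 + b a) * ∏ i ∈ s, (1 + b i) - 1 := by ring

lemma normTprodSubOne (f : ℕ → ℂ) (b : ℕ → ℝ) (hb0 : ∀ n, 0 ≤ b n)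
    (hbs : Summable b) (h : ∀ n, ‖f n - 1‖ ≤ b n) :
    ‖(∏' n, f n) - 1‖ ≤ Real.exp (∑' n, b n) - 1 := by
  have htsum0 : 0 ≤ ∑' n, b n := tsum_nonneg hb0
  by_cases hm : Multipliable f
  · have hbd : ∀ s : Finset ℕ, ‖(∏ i ∈ s, f i) - 1‖ ≤ Real.exp (∑' n, b n) - 1 := by
      intro s
      calc ‖(∏ i ∈ s, f i) - 1‖ ≤ (∏ i ∈ s, (1 + b i)) - 1 :=
            normProdSubOne s f b (fun i _ => h i) (fun i _ => hb0 i)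
        _ ≤ Real.exp (∑ i ∈ s, b i) - 1 := by
            have : (∏ i ∈ s, (1 + b i)) ≤ ∏ i ∈ s, Real.exp (b i) := by
              apply Finset.prod_le_prod (fun i _ => by linarith [hb0 i])
                (fun i _ => by linarith [Real.add_one_le_exp (b i)])
            rw [← Real.exp_sum] at this
            linarith
        _ ≤ Real.exp (∑' n, b n) - 1 := by
            gcongr
            exact Summable.sum_le_tsum s (fun i _ => hb0 i) hbs
    have hT : Tendsto (fun s : Finset ℕ => ‖(∏ i ∈ s, f i) - 1‖) atTop
        (nhds ‖(∏' n, f n) - 1‖) := by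
      have h2 := hm.hasProd
      rw [HasProd] at h2
      exact ((h2.sub tendsto_const_nhds).norm)
    exact le_of_tendsto hT (Filter.Eventually.of_forall hbd)
  · rw [tprod_eq_one_of_not_multipliable hm]
    simp only [sub_self, norm_zero]
    linarith [Real.one_le_exp htsum0]

lemma threeFactor (x y z : ℂ) (m : ℝ) (hm : m ≤ 1)
    (hx : ‖x‖ ≤ m) (hy : ‖y‖ ≤ m) (hz : ‖z‖ ≤ m) :
    ‖(1 - x) * (1 - y) * (1 - z) - 1‖ ≤ 7 * m := by
  have h0 : 0 ≤ m := le_trans (norm_nonneg x) hx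
  have key : (1 - x) * (1 - y) * (1 - z) - 1
      = -(x + y + z) + (x * y + x * z + y * z) - x * y * z := by ring
  rw [key]
  have h1 : ‖-(x + y + z) + (x * y + x * z + y * z) - x * y * z‖
      ≤ ‖x‖ + ‖y‖ + ‖z‖ + (‖x‖ * ‖y‖ + ‖x‖ * ‖z‖ + ‖y‖ * ‖z‖) + ‖x‖ * ‖y‖ * ‖z‖ := by
    calc ‖-(x + y + z) + (x * y + x * z + y * z) - x * y * z‖
        ≤ ‖-(x + y + z) + (x * y + x * z + y * z)‖ + ‖x * y * z‖ := norm_sub_le _ _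
      _ ≤ ‖-(x + y + z)‖ + ‖x * y + x * z + y * z‖ + ‖x * y * z‖ := by
          gcongr; exact norm_add_le _ _
      _ ≤ (‖x‖ + ‖y‖ + ‖z‖) + (‖x * y‖ + ‖x * z‖ + ‖y * z‖) + ‖x * y * z‖ := by
          gcongr
          · rw [norm_neg]
            exact le_trans (norm_add_le _ _) (by gcongr; exact norm_add_le _ _)
          · exact le_trans (norm_add_le _ _) (by gcongr; exact norm_add_le _ _)
      _ = (‖x‖ + ‖y‖ + ‖z‖) + (‖x‖ * ‖y‖ + ‖x‖ * ‖z‖ + ‖y‖ * ‖z‖) + ‖x‖ * ‖y‖ * ‖z‖ := by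
          simp [norm_mul]
  refine le_trans h1 ?_
  have nx := norm_nonneg x; have ny := norm_nonneg y; have nz := norm_nonneg z
  have pxy : ‖x‖ * ‖y‖ ≤ m * m := mul_le_mul hx hy ny h0
  have pxz : ‖x‖ * ‖z‖ ≤ m * m := mul_le_mul hx hz nz h0
  have pyz : ‖y‖ * ‖z‖ ≤ m * m := mul_le_mul hy hz nz h0
  have pxyz : ‖x‖ * ‖y‖ * ‖z‖ ≤ m * m * m :=
    mul_le_mul pxy hz nz (mul_nonneg h0 h0)
  have hm2 : m * m ≤ m := by nlinarith
  have hm3 : m * m * m ≤ m := by nlinarith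
  linarith

lemma tprodTendstoOne (f : ℝ → ℕ → ℂ) (C : ℝ) (hC : 0 ≤ C) (ρ : ℝ → ℝ)
    (hρ0 : ∀ᶠ t in atTop, 0 ≤ ρ t)
    (hρ : Tendsto ρ atTop (nhds 0))
    (hf : ∀ᶠ t in atTop, ∀ n : ℕ, ‖f t n - 1‖ ≤ C * ρ t * (1/2)^n) :
    Tendsto (fun t => ∏' n, f t n) atTop (nhds 1) := by
  rw [tendsto_iff_norm_sub_tendsto_zero]
  have hb : ∀ᶠ t in atTop, ‖(∏' n, f t n) - 1‖ ≤ Real.exp (2 * (C * ρ t)) - 1 := by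
    filter_upwards [hf, hρ0] with t ht hρt
    have hsum : Summable (fun n : ℕ => C * ρ t * (1/2)^n) :=
      (summable_geometric_of_lt_one (by norm_num) (by norm_num)).mul_left _
    have htsum : ∑' n : ℕ, C * ρ t * (1/2)^n = C * ρ t * 2 := by
      rw [tsum_mul_left, tsum_geometric_of_lt_one (by norm_num) (by norm_num)]
      norm_num
    have := normTprodSubOne (f t) (fun n => C * ρ t * (1/2)^n)
      (fun n => by positivity) hsum ht
    rw [htsum] at this
    calc ‖(∏' n, f t n) - 1‖ ≤ Real.exp (C * ρ t * 2) - 1 := this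
      _ = Real.exp (2 * (C * ρ t)) - 1 := by ring_nf
  have hlim : Tendsto (fun t => Real.exp (2 * (C * ρ t)) - 1) atTop (nhds 0) := by
    have : Tendsto (fun t => 2 * (C * ρ t)) atTop (nhds 0) := by
      simpa using (hρ.const_mul C).const_mul 2
    simpa using (Real.continuous_exp.continuousAt.tendsto.comp this).sub
      (tendsto_const_nhds : Tendsto (fun _ : ℝ => (1:ℝ)) atTop (nhds 1))
  exact squeeze_zero' (Filter.Eventually.of_forall fun t => norm_nonneg _) hb hlim

lemma prodPartTendsto (θ : ℝ) (hθ0 : 0 ≤ θ) (hθ1 : θ < 1) (ν : ℝ → ℂ) (K : ℝ) (hK : 1 ≤ K)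
    (hv : ∀ᶠ t in atTop, ‖Complex.exp (2 * Real.pi * Complex.I * ν t)‖
      ≤ K * Real.exp (2 * Real.pi * θ * t))
    (hv' : ∀ᶠ t in atTop, ‖Complex.exp (-(2 * Real.pi * Complex.I * ν t))‖
      ≤ K * Real.exp (2 * Real.pi * θ * t)) :
    Tendsto (fun t : ℝ => ∏' n : ℕ,
      ((1 - Complex.exp (2 * Real.pi * Complex.I * ((t:ℂ) * Complex.I)) ^ (n + 1)) *
        (1 - Complex.exp (2 * Real.pi * Complex.I * ((t:ℂ) * Complex.I)) ^ (n + 1) *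
          Complex.exp (2 * Real.pi * Complex.I * ν t)) *
        (1 - Complex.exp (2 * Real.pi * Complex.I * ((t:ℂ) * Complex.I)) ^ (n + 1) *
          Complex.exp (-(2 * Real.pi * Complex.I * ν t)))))
      atTop (nhds 1) := by
  have hπ := Real.pi_gt_three
  have hc : 0 < 2 * Real.pi * (1 - θ) := by nlinarith
  set ρ : ℝ → ℝ := fun t => Real.exp (-(2 * Real.pi * (1 - θ) * t)) with hρdef
  have hρ : Tendsto ρ atTop (nhds 0) := by
    apply Real.tendsto_exp_atBot.comp
    have h1 : Tendsto (fun t : ℝ => 2 * Real.pi * (1 - θ) * t) atTop atTop :=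
      Tendsto.const_mul_atTop hc tendsto_id
    have h2 : Tendsto (fun t : ℝ => -(2 * Real.pi * (1 - θ) * t)) atTop atBot := by
      simpa [Function.comp_def] using tendsto_neg_atTop_atBot.comp h1
    exact h2
  have hu : ∀ t : ℝ, ‖Complex.exp (2 * Real.pi * Complex.I * ((t:ℂ) * Complex.I))‖
      = Real.exp (-(2 * Real.pi * t)) := by
    intro t
    have harg : (2 * (Real.pi:ℂ) * Complex.I * ((t:ℂ) * Complex.I))
        = ((-(2 * Real.pi * t) : ℝ) : ℂ) := by
      push_cast
      linear_combination (2 * (Real.pi:ℂ) * (t:ℂ)) * Complex.I_mul_I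
    rw [harg, Complex.norm_exp_ofReal]
  have hKρ : ∀ᶠ t in atTop, K * ρ t ≤ 1 := by
    have : Tendsto (fun t => K * ρ t) atTop (nhds 0) := by simpa using hρ.const_mul K
    exact this.eventually_le_const (by norm_num)
  apply tprodTendstoOne _ (7 * K) (by linarith) ρ
    (Filter.Eventually.of_forall fun t => (Real.exp_pos _).le) hρ
  filter_upwards [hv, hv', hKρ, eventually_ge_atTop (1:ℝ)] with t htv htv' htKρ ht1
  intro n
  set U := Complex.exp (2 * Real.pi * Complex.I * ((t:ℂ) * Complex.I)) with hU
  have he1 : Real.exp (-(2 * Real.pi * t)) ≤ 1/2 := by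
    have h7 : (7:ℝ) ≤ Real.exp 6 := by nlinarith [Real.add_one_le_exp (6:ℝ)]
    have h2 : Real.exp (-(2 * Real.pi * t)) ≤ Real.exp (-6) := by
      apply Real.exp_le_exp.2; nlinarith
    have h3 : Real.exp (-6) ≤ 1/2 := by
      rw [Real.exp_neg]
      rw [inv_le_comm₀ (Real.exp_pos 6) (by norm_num)]
      linarith
    linarith
  have hpow : (Real.exp (-(2 * Real.pi * t)))^n ≤ (1/2)^n :=
    pow_le_pow_left₀ (Real.exp_nonneg _) he1 n
  -- key bound for the middle and outer factors
  have hkey : (Real.exp (-(2 * Real.pi * t)))^(n+1) * (K * Real.exp (2 * Real.pi * θ * t))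
      ≤ K * ρ t * (1/2)^n := by
    have heq : (Real.exp (-(2 * Real.pi * t)))^(n+1) * (K * Real.exp (2 * Real.pi * θ * t))
        = K * ρ t * (Real.exp (-(2 * Real.pi * t)))^n := by
      rw [pow_succ, hρdef]
      rw [show K * Real.exp (-(2 * Real.pi * (1 - θ) * t)) * (Real.exp (-(2*Real.pi*t)))^n
        = (Real.exp (-(2 * Real.pi * (1 - θ) * t))) * (Real.exp (-(2*Real.pi*t)))^n * K by ring]
      rw [show (Real.exp (-(2*Real.pi*t)))^n * Real.exp (-(2*Real.pi*t))
          * (K * Real.exp (2 * Real.pi * θ * t))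
        = (Real.exp (-(2*Real.pi*t)) * Real.exp (2 * Real.pi * θ * t))
          * (Real.exp (-(2*Real.pi*t)))^n * K by ring]
      rw [← Real.exp_add]
      ring_nf
    rw [heq]
    have : (0:ℝ) ≤ K * ρ t := by positivity
    exact mul_le_mul_of_nonneg_left hpow this
  have hm1 : K * ρ t * (1/2)^n ≤ 1 := by
    have h12 : ((1:ℝ)/2)^n ≤ 1 := pow_le_one₀ (by norm_num) (by norm_num)
    have : (0:ℝ) ≤ K * ρ t := by positivity
    nlinarith
  have hxb : ‖U^(n+1)‖ ≤ K * ρ t * (1/2)^n := by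
    rw [norm_pow, hu]
    calc (Real.exp (-(2 * Real.pi * t)))^(n+1)
        ≤ (Real.exp (-(2 * Real.pi * t)))^(n+1) * (K * Real.exp (2 * Real.pi * θ * t)) := by
          have h0' : (0:ℝ) ≤ 2 * Real.pi * θ * t :=
            mul_nonneg (mul_nonneg (by positivity) hθ0) (by linarith)
          have hone : 1 ≤ K * Real.exp (2 * Real.pi * θ * t) := by
            nlinarith [Real.one_le_exp h0', Real.exp_pos (2 * Real.pi * θ * t)]
          exact le_mul_of_one_le_right (pow_nonneg (Real.exp_nonneg _) _) hone
      _ ≤ K * ρ t * (1/2)^n := hkey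
  have hyb : ‖U^(n+1) * Complex.exp (2 * Real.pi * Complex.I * ν t)‖ ≤ K * ρ t * (1/2)^n := by
    rw [norm_mul, norm_pow, hu]
    calc (Real.exp (-(2 * Real.pi * t)))^(n+1) * ‖Complex.exp (2 * Real.pi * Complex.I * ν t)‖
        ≤ (Real.exp (-(2 * Real.pi * t)))^(n+1) * (K * Real.exp (2 * Real.pi * θ * t)) := by
          exact mul_le_mul_of_nonneg_left htv (pow_nonneg (Real.exp_nonneg _) _)
      _ ≤ K * ρ t * (1/2)^n := hkey
  have hzb : ‖U^(n+1) * Complex.exp (-(2 * Real.pi * Complex.I * ν t))‖ ≤ K * ρ t * (1/2)^n := by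
    rw [norm_mul, norm_pow, hu]
    calc (Real.exp (-(2 * Real.pi * t)))^(n+1) * ‖Complex.exp (-(2 * Real.pi * Complex.I * ν t))‖
        ≤ (Real.exp (-(2 * Real.pi * t)))^(n+1) * (K * Real.exp (2 * Real.pi * θ * t)) := by
          exact mul_le_mul_of_nonneg_left htv' (pow_nonneg (Real.exp_nonneg _) _)
      _ ≤ K * ρ t * (1/2)^n := hkey
  have := threeFactor (U^(n+1)) (U^(n+1) * Complex.exp (2 * Real.pi * Complex.I * ν t))
    (U^(n+1) * Complex.exp (-(2 * Real.pi * Complex.I * ν t)))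
    (K * ρ t * (1/2)^n) hm1 hxb hyb hzb
  calc ‖(1 - U^(n+1)) * (1 - U^(n+1) * Complex.exp (2 * Real.pi * Complex.I * ν t)) *
        (1 - U^(n+1) * Complex.exp (-(2 * Real.pi * Complex.I * ν t))) - 1‖
      ≤ 7 * (K * ρ t * (1/2)^n) := this
    _ = 7 * K * ρ t * (1/2)^n := by ring

lemma termTendsto (z cc bb : ℂ) (θ : ℝ) (hθ0 : 0 ≤ θ) (hθ1 : θ < 1)
    (hden : θ = 0 → Complex.exp (2 * Real.pi * Complex.I * (cc * z + bb)) ≠ 1) :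
    ∃ L, Tendsto (fun t : ℝ =>
      Complex.exp (-(2 * Real.pi * Complex.I * z * ((θ:ℝ):ℂ))) *
        Theta ((1 - cc) * z - ((θ:ℝ):ℂ) * ((t:ℂ) * Complex.I) - bb) ((t:ℂ) * Complex.I) /
        Theta (cc * z + ((θ:ℝ):ℂ) * ((t:ℂ) * Complex.I) + bb) ((t:ℂ) * Complex.I))
      atTop (nhds L) := by
  set γ : ℂ := (1 - cc) * z - bb with hγ
  set β : ℂ := cc * z + bb with hβ
  set X : ℝ → ℂ := fun t => Complex.exp (2 * Real.pi * Complex.I * ((θ:ℝ):ℂ) * ((t:ℂ) * Complex.I))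
    with hX
  -- limit of X and nonvanishing of the denominator head limit
  obtain ⟨E, hXE, hLden⟩ : ∃ E, Tendsto X atTop (nhds E) ∧
      Complex.exp (-(Real.pi * Complex.I * β)) - Complex.exp (Real.pi * Complex.I * β) * E ≠ 0 := by
    rcases eq_or_lt_of_le hθ0 with h0 | hpos
    · refine ⟨1, ?_, ?_⟩
      · have : X = fun _ : ℝ => 1 := by
          funext t; rw [hX]; simp [← h0]
        rw [this]; exact tendsto_const_nhds
      · have hfac : Complex.exp (-(Real.pi * Complex.I * β)) - Complex.exp (Real.pi * Complex.I * β) * 1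
            = Complex.exp (-(Real.pi * Complex.I * β)) * (1 - Complex.exp (2 * Real.pi * Complex.I * β)) := by
          rw [mul_sub, mul_one, ← Complex.exp_add]
          ring_nf
        rw [hfac]
        exact mul_ne_zero (Complex.exp_ne_zero _)
          (sub_ne_zero.2 fun h => hden h0.symm h.symm)
    · refine ⟨0, ?_, by simpa using Complex.exp_ne_zero (-(Real.pi * Complex.I * β))⟩
      rw [tendsto_zero_iff_norm_tendsto_zero]
      have hXnorm : ∀ t : ℝ, ‖X t‖ = Real.exp (-(2 * Real.pi * θ * t)) := by
        intro t
        have harg : (2 * (Real.pi:ℂ) * Complex.I * ((θ:ℝ):ℂ) * ((t:ℂ) * Complex.I))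
            = ((-(2 * Real.pi * θ * t) : ℝ) : ℂ) := by
          push_cast
          linear_combination (2 * (Real.pi:ℂ) * (θ:ℂ) * (t:ℂ)) * Complex.I_mul_I
        rw [hX]; simp only []; rw [harg, Complex.norm_exp_ofReal]
      simp only [hXnorm]
      apply Real.tendsto_exp_atBot.comp
      have h1 : Tendsto (fun t : ℝ => 2 * Real.pi * θ * t) atTop atTop :=
        Tendsto.const_mul_atTop (by positivity) tendsto_id
      simpa [Function.comp_def] using tendsto_neg_atTop_atBot.comp h1
  -- the two infinite products tend to 1
  set K : ℝ := Real.exp (|(2 * Real.pi * Complex.I * γ).re| + |(2 * Real.pi * Complex.I * β).re|)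
    with hK
  have hK1 : 1 ≤ K := Real.one_le_exp (by positivity)
  have hsplit : ∀ (w : ℂ) (s : ℝ) (t : ℝ),
      ‖Complex.exp (2 * Real.pi * Complex.I * w + ((s:ℝ):ℂ))‖
      = Real.exp ((2 * Real.pi * Complex.I * w).re) * Real.exp s := by
    intro w s t
    rw [Complex.exp_add, norm_mul,
      Complex.norm_exp, Complex.norm_exp_ofReal]
  have hbound : ∀ (w : ℂ) (hw : |(2 * Real.pi * Complex.I * w).re|
        ≤ |(2 * Real.pi * Complex.I * γ).re| + |(2 * Real.pi * Complex.I * β).re|)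
      (s t : ℝ) (hst : s ≤ 2 * Real.pi * θ * t),
      ‖Complex.exp (2 * Real.pi * Complex.I * w + ((s:ℝ):ℂ))‖
      ≤ K * Real.exp (2 * Real.pi * θ * t) := by
    intro w hw s t hst
    rw [hsplit w s t, hK]
    have h1 : Real.exp ((2 * Real.pi * Complex.I * w).re) ≤ K := by
      rw [hK]; apply Real.exp_le_exp.2; exact le_trans (le_abs_self _) hw
    have h2 : Real.exp s ≤ Real.exp (2 * Real.pi * θ * t) := Real.exp_le_exp.2 hst
    rw [← hK]
    exact mul_le_mul h1 h2 (Real.exp_nonneg _) (le_trans zero_le_one hK1)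
  -- bounds for the exponentials appearing in the infinite products
  have hγre : |(2 * Real.pi * Complex.I * γ).re| ≤
      |(2 * Real.pi * Complex.I * γ).re| + |(2 * Real.pi * Complex.I * β).re| :=
    le_add_of_nonneg_right (abs_nonneg _)
  have hβre : |(2 * Real.pi * Complex.I * β).re| ≤
      |(2 * Real.pi * Complex.I * γ).re| + |(2 * Real.pi * Complex.I * β).re| :=
    le_add_of_nonneg_left (abs_nonneg _)
  have hnegγ : 2 * (Real.pi:ℂ) * Complex.I * (-γ) = -(2 * Real.pi * Complex.I * γ) := by ring
  have hnegβ : 2 * (Real.pi:ℂ) * Complex.I * (-β) = -(2 * Real.pi * Complex.I * β) := by ring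
  have hγre' : |(2 * Real.pi * Complex.I * (-γ)).re| ≤
      |(2 * Real.pi * Complex.I * γ).re| + |(2 * Real.pi * Complex.I * β).re| := by
    rw [hnegγ, Complex.neg_re, abs_neg]; exact hγre
  have hβre' : |(2 * Real.pi * Complex.I * (-β)).re| ≤
      |(2 * Real.pi * Complex.I * γ).re| + |(2 * Real.pi * Complex.I * β).re| := by
    rw [hnegβ, Complex.neg_re, abs_neg]; exact hβre
  have hstneg : ∀ t : ℝ, 0 ≤ t → -(2 * Real.pi * θ * t) ≤ 2 * Real.pi * θ * t := by
    intro t ht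
    have : 0 ≤ 2 * Real.pi * θ * t := mul_nonneg (mul_nonneg (by positivity) hθ0) ht
    linarith
  have hv1 : ∀ᶠ t : ℝ in atTop, ‖Complex.exp (2 * Real.pi * Complex.I *
      ((1 - cc) * z - ((θ:ℝ):ℂ) * ((t:ℂ) * Complex.I) - bb))‖
      ≤ K * Real.exp (2 * Real.pi * θ * t) := by
    filter_upwards [eventually_ge_atTop (0:ℝ)] with t ht
    have harg : 2 * (Real.pi:ℂ) * Complex.I *
        ((1 - cc) * z - ((θ:ℝ):ℂ) * ((t:ℂ) * Complex.I) - bb)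
        = 2 * Real.pi * Complex.I * γ + ((2 * Real.pi * θ * t : ℝ):ℂ) := by
      rw [hγ]; push_cast
      linear_combination (-(2 * (Real.pi:ℂ) * (θ:ℂ) * (t:ℂ))) * Complex.I_mul_I
    rw [harg]
    exact hbound γ hγre _ t le_rfl
  have hv1' : ∀ᶠ t : ℝ in atTop, ‖Complex.exp (-(2 * Real.pi * Complex.I *
      ((1 - cc) * z - ((θ:ℝ):ℂ) * ((t:ℂ) * Complex.I) - bb)))‖
      ≤ K * Real.exp (2 * Real.pi * θ * t) := by
    filter_upwards [eventually_ge_atTop (0:ℝ)] with t ht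
    have harg : -(2 * (Real.pi:ℂ) * Complex.I *
        ((1 - cc) * z - ((θ:ℝ):ℂ) * ((t:ℂ) * Complex.I) - bb))
        = 2 * Real.pi * Complex.I * (-γ) + ((-(2 * Real.pi * θ * t) : ℝ):ℂ) := by
      rw [hγ]; push_cast
      linear_combination (2 * (Real.pi:ℂ) * (θ:ℂ) * (t:ℂ)) * Complex.I_mul_I
    rw [harg]
    exact hbound (-γ) hγre' _ t (hstneg t ht)
  have hv2 : ∀ᶠ t : ℝ in atTop, ‖Complex.exp (2 * Real.pi * Complex.I *
      (cc * z + ((θ:ℝ):ℂ) * ((t:ℂ) * Complex.I) + bb))‖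
      ≤ K * Real.exp (2 * Real.pi * θ * t) := by
    filter_upwards [eventually_ge_atTop (0:ℝ)] with t ht
    have harg : 2 * (Real.pi:ℂ) * Complex.I *
        (cc * z + ((θ:ℝ):ℂ) * ((t:ℂ) * Complex.I) + bb)
        = 2 * Real.pi * Complex.I * β + ((-(2 * Real.pi * θ * t) : ℝ):ℂ) := by
      rw [hβ]; push_cast
      linear_combination (2 * (Real.pi:ℂ) * (θ:ℂ) * (t:ℂ)) * Complex.I_mul_I
    rw [harg]
    exact hbound β hβre _ t (hstneg t ht)
  have hv2' : ∀ᶠ t : ℝ in atTop, ‖Complex.exp (-(2 * Real.pi * Complex.I *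
      (cc * z + ((θ:ℝ):ℂ) * ((t:ℂ) * Complex.I) + bb)))‖
      ≤ K * Real.exp (2 * Real.pi * θ * t) := by
    filter_upwards [eventually_ge_atTop (0:ℝ)] with t ht
    have harg : -(2 * (Real.pi:ℂ) * Complex.I *
        (cc * z + ((θ:ℝ):ℂ) * ((t:ℂ) * Complex.I) + bb))
        = 2 * Real.pi * Complex.I * (-β) + ((2 * Real.pi * θ * t : ℝ):ℂ) := by
      rw [hβ]; push_cast
      linear_combination (-(2 * (Real.pi:ℂ) * (θ:ℂ) * (t:ℂ))) * Complex.I_mul_I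
    rw [harg]
    exact hbound (-β) hβre' _ t le_rfl
  have hP1 : Tendsto (fun t : ℝ => ∏' n : ℕ,
      ((1 - Complex.exp (2 * Real.pi * Complex.I * ((t:ℂ) * Complex.I)) ^ (n + 1)) *
        (1 - Complex.exp (2 * Real.pi * Complex.I * ((t:ℂ) * Complex.I)) ^ (n + 1) *
          Complex.exp (2 * Real.pi * Complex.I *
            ((1 - cc) * z - ((θ:ℝ):ℂ) * ((t:ℂ) * Complex.I) - bb))) *
        (1 - Complex.exp (2 * Real.pi * Complex.I * ((t:ℂ) * Complex.I)) ^ (n + 1) *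
          Complex.exp (-(2 * Real.pi * Complex.I *
            ((1 - cc) * z - ((θ:ℝ):ℂ) * ((t:ℂ) * Complex.I) - bb))))))
      atTop (nhds 1) :=
    prodPartTendsto θ hθ0 hθ1
      (fun t => (1 - cc) * z - ((θ:ℝ):ℂ) * ((t:ℂ) * Complex.I) - bb) K hK1 hv1 hv1'
  have hP2 : Tendsto (fun t : ℝ => ∏' n : ℕ,
      ((1 - Complex.exp (2 * Real.pi * Complex.I * ((t:ℂ) * Complex.I)) ^ (n + 1)) *
        (1 - Complex.exp (2 * Real.pi * Complex.I * ((t:ℂ) * Complex.I)) ^ (n + 1) *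
          Complex.exp (2 * Real.pi * Complex.I *
            (cc * z + ((θ:ℝ):ℂ) * ((t:ℂ) * Complex.I) + bb))) *
        (1 - Complex.exp (2 * Real.pi * Complex.I * ((t:ℂ) * Complex.I)) ^ (n + 1) *
          Complex.exp (-(2 * Real.pi * Complex.I *
            (cc * z + ((θ:ℝ):ℂ) * ((t:ℂ) * Complex.I) + bb))))))
      atTop (nhds 1) :=
    prodPartTendsto θ hθ0 hθ1
      (fun t => cc * z + ((θ:ℝ):ℂ) * ((t:ℂ) * Complex.I) + bb) K hK1 hv2 hv2'
  -- heads
  set M : ℝ → ℂ := fun t => Complex.exp ((Real.pi:ℂ) * Complex.I * ((θ:ℝ):ℂ) * ((t:ℂ) * Complex.I))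
    with hM
  have hMne : ∀ t, M t ≠ 0 := fun t => Complex.exp_ne_zero _
  have hCne : ∀ t : ℝ, (Complex.I * Complex.exp (Real.pi * Complex.I * ((t:ℂ) * Complex.I) / 4)) ≠ 0 :=
    fun t => mul_ne_zero Complex.I_ne_zero (Complex.exp_ne_zero _)
  have hhead1 : ∀ t : ℝ, M t *
      (Complex.exp (-(Real.pi * Complex.I *
        ((1 - cc) * z - ((θ:ℝ):ℂ) * ((t:ℂ) * Complex.I) - bb))) *
      (1 - Complex.exp (2 * Real.pi * Complex.I *
        ((1 - cc) * z - ((θ:ℝ):ℂ) * ((t:ℂ) * Complex.I) - bb))))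
      = Complex.exp (-(Real.pi * Complex.I * γ)) * X t - Complex.exp (Real.pi * Complex.I * γ) := by
    intro t
    have h1 : M t * Complex.exp (-(Real.pi * Complex.I *
        ((1 - cc) * z - ((θ:ℝ):ℂ) * ((t:ℂ) * Complex.I) - bb)))
        = Complex.exp (-(Real.pi * Complex.I * γ)) * X t := by
      rw [hM, hX]
      simp only [← Complex.exp_add]
      congr 1
      rw [hγ]; ring
    have h2 : M t * Complex.exp (-(Real.pi * Complex.I *
        ((1 - cc) * z - ((θ:ℝ):ℂ) * ((t:ℂ) * Complex.I) - bb))) *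
        Complex.exp (2 * Real.pi * Complex.I *
        ((1 - cc) * z - ((θ:ℝ):ℂ) * ((t:ℂ) * Complex.I) - bb))
        = Complex.exp (Real.pi * Complex.I * γ) := by
      rw [hM]
      simp only [← Complex.exp_add]
      congr 1
      rw [hγ]; ring
    calc M t * (Complex.exp (-(Real.pi * Complex.I *
          ((1 - cc) * z - ((θ:ℝ):ℂ) * ((t:ℂ) * Complex.I) - bb))) *
        (1 - Complex.exp (2 * Real.pi * Complex.I *
          ((1 - cc) * z - ((θ:ℝ):ℂ) * ((t:ℂ) * Complex.I) - bb))))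
        = M t * Complex.exp (-(Real.pi * Complex.I *
            ((1 - cc) * z - ((θ:ℝ):ℂ) * ((t:ℂ) * Complex.I) - bb)))
          - M t * Complex.exp (-(Real.pi * Complex.I *
            ((1 - cc) * z - ((θ:ℝ):ℂ) * ((t:ℂ) * Complex.I) - bb))) *
            Complex.exp (2 * Real.pi * Complex.I *
            ((1 - cc) * z - ((θ:ℝ):ℂ) * ((t:ℂ) * Complex.I) - bb)) := by ring
      _ = Complex.exp (-(Real.pi * Complex.I * γ)) * X t
          - Complex.exp (Real.pi * Complex.I * γ) := by rw [h2, h1]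
  have hhead2 : ∀ t : ℝ, M t *
      (Complex.exp (-(Real.pi * Complex.I *
        (cc * z + ((θ:ℝ):ℂ) * ((t:ℂ) * Complex.I) + bb))) *
      (1 - Complex.exp (2 * Real.pi * Complex.I *
        (cc * z + ((θ:ℝ):ℂ) * ((t:ℂ) * Complex.I) + bb))))
      = Complex.exp (-(Real.pi * Complex.I * β)) - Complex.exp (Real.pi * Complex.I * β) * X t := by
    intro t
    have h1 : M t * Complex.exp (-(Real.pi * Complex.I *
        (cc * z + ((θ:ℝ):ℂ) * ((t:ℂ) * Complex.I) + bb)))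
        = Complex.exp (-(Real.pi * Complex.I * β)) := by
      rw [hM]
      simp only [← Complex.exp_add]
      congr 1
      rw [hβ]; ring
    have h2 : M t * Complex.exp (-(Real.pi * Complex.I *
        (cc * z + ((θ:ℝ):ℂ) * ((t:ℂ) * Complex.I) + bb))) *
        Complex.exp (2 * Real.pi * Complex.I *
        (cc * z + ((θ:ℝ):ℂ) * ((t:ℂ) * Complex.I) + bb))
        = Complex.exp (Real.pi * Complex.I * β) * X t := by
      rw [hM, hX]
      simp only [← Complex.exp_add]
      congr 1
      rw [hβ]; ring
    calc M t * (Complex.exp (-(Real.pi * Complex.I *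
          (cc * z + ((θ:ℝ):ℂ) * ((t:ℂ) * Complex.I) + bb))) *
        (1 - Complex.exp (2 * Real.pi * Complex.I *
          (cc * z + ((θ:ℝ):ℂ) * ((t:ℂ) * Complex.I) + bb))))
        = M t * Complex.exp (-(Real.pi * Complex.I *
            (cc * z + ((θ:ℝ):ℂ) * ((t:ℂ) * Complex.I) + bb)))
          - M t * Complex.exp (-(Real.pi * Complex.I *
            (cc * z + ((θ:ℝ):ℂ) * ((t:ℂ) * Complex.I) + bb))) *
            Complex.exp (2 * Real.pi * Complex.I *
            (cc * z + ((θ:ℝ):ℂ) * ((t:ℂ) * Complex.I) + bb)) := by ring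
      _ = Complex.exp (-(Real.pi * Complex.I * β))
          - Complex.exp (Real.pi * Complex.I * β) * X t := by rw [h2, h1]
  -- pointwise rewriting of the ratio
  have hratio : ∀ t : ℝ,
      Complex.exp (-(2 * Real.pi * Complex.I * z * ((θ:ℝ):ℂ))) *
        Theta ((1 - cc) * z - ((θ:ℝ):ℂ) * ((t:ℂ) * Complex.I) - bb) ((t:ℂ) * Complex.I) /
        Theta (cc * z + ((θ:ℝ):ℂ) * ((t:ℂ) * Complex.I) + bb) ((t:ℂ) * Complex.I)
      = Complex.exp (-(2 * Real.pi * Complex.I * z * ((θ:ℝ):ℂ))) *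
        (((Complex.exp (-(Real.pi * Complex.I * γ)) * X t - Complex.exp (Real.pi * Complex.I * γ)) *
          (∏' n : ℕ,
            ((1 - Complex.exp (2 * Real.pi * Complex.I * ((t:ℂ) * Complex.I)) ^ (n + 1)) *
              (1 - Complex.exp (2 * Real.pi * Complex.I * ((t:ℂ) * Complex.I)) ^ (n + 1) *
                Complex.exp (2 * Real.pi * Complex.I *
                  ((1 - cc) * z - ((θ:ℝ):ℂ) * ((t:ℂ) * Complex.I) - bb))) *
              (1 - Complex.exp (2 * Real.pi * Complex.I * ((t:ℂ) * Complex.I)) ^ (n + 1) *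
                Complex.exp (-(2 * Real.pi * Complex.I *
                  ((1 - cc) * z - ((θ:ℝ):ℂ) * ((t:ℂ) * Complex.I) - bb))))))) /
        ((Complex.exp (-(Real.pi * Complex.I * β)) - Complex.exp (Real.pi * Complex.I * β) * X t) *
          (∏' n : ℕ,
            ((1 - Complex.exp (2 * Real.pi * Complex.I * ((t:ℂ) * Complex.I)) ^ (n + 1)) *
              (1 - Complex.exp (2 * Real.pi * Complex.I * ((t:ℂ) * Complex.I)) ^ (n + 1) *
                Complex.exp (2 * Real.pi * Complex.I *
                  (cc * z + ((θ:ℝ):ℂ) * ((t:ℂ) * Complex.I) + bb))) *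
              (1 - Complex.exp (2 * Real.pi * Complex.I * ((t:ℂ) * Complex.I)) ^ (n + 1) *
                Complex.exp (-(2 * Real.pi * Complex.I *
                  (cc * z + ((θ:ℝ):ℂ) * ((t:ℂ) * Complex.I) + bb)))))))) := by
    intro t
    rw [mul_div_assoc]
    congr 1
    have ha : M t * Theta ((1 - cc) * z - ((θ:ℝ):ℂ) * ((t:ℂ) * Complex.I) - bb) ((t:ℂ) * Complex.I)
        = (Complex.I * Complex.exp (Real.pi * Complex.I * ((t:ℂ) * Complex.I) / 4)) *
          ((Complex.exp (-(Real.pi * Complex.I * γ)) * X t - Complex.exp (Real.pi * Complex.I * γ)) *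
          (∏' n : ℕ,
            ((1 - Complex.exp (2 * Real.pi * Complex.I * ((t:ℂ) * Complex.I)) ^ (n + 1)) *
              (1 - Complex.exp (2 * Real.pi * Complex.I * ((t:ℂ) * Complex.I)) ^ (n + 1) *
                Complex.exp (2 * Real.pi * Complex.I *
                  ((1 - cc) * z - ((θ:ℝ):ℂ) * ((t:ℂ) * Complex.I) - bb))) *
              (1 - Complex.exp (2 * Real.pi * Complex.I * ((t:ℂ) * Complex.I)) ^ (n + 1) *
                Complex.exp (-(2 * Real.pi * Complex.I *
                  ((1 - cc) * z - ((θ:ℝ):ℂ) * ((t:ℂ) * Complex.I) - bb))))))) := by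
      rw [Theta]
      linear_combination (Complex.I * Complex.exp (Real.pi * Complex.I * ((t:ℂ) * Complex.I) / 4) *
        (∏' n : ℕ,
            ((1 - Complex.exp (2 * Real.pi * Complex.I * ((t:ℂ) * Complex.I)) ^ (n + 1)) *
              (1 - Complex.exp (2 * Real.pi * Complex.I * ((t:ℂ) * Complex.I)) ^ (n + 1) *
                Complex.exp (2 * Real.pi * Complex.I *
                  ((1 - cc) * z - ((θ:ℝ):ℂ) * ((t:ℂ) * Complex.I) - bb))) *
              (1 - Complex.exp (2 * Real.pi * Complex.I * ((t:ℂ) * Complex.I)) ^ (n + 1) *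
                Complex.exp (-(2 * Real.pi * Complex.I *
                  ((1 - cc) * z - ((θ:ℝ):ℂ) * ((t:ℂ) * Complex.I) - bb))))))) * (hhead1 t)
    have hb : M t * Theta (cc * z + ((θ:ℝ):ℂ) * ((t:ℂ) * Complex.I) + bb) ((t:ℂ) * Complex.I)
        = (Complex.I * Complex.exp (Real.pi * Complex.I * ((t:ℂ) * Complex.I) / 4)) *
          ((Complex.exp (-(Real.pi * Complex.I * β)) - Complex.exp (Real.pi * Complex.I * β) * X t) *
          (∏' n : ℕ,
            ((1 - Complex.exp (2 * Real.pi * Complex.I * ((t:ℂ) * Complex.I)) ^ (n + 1)) *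
              (1 - Complex.exp (2 * Real.pi * Complex.I * ((t:ℂ) * Complex.I)) ^ (n + 1) *
                Complex.exp (2 * Real.pi * Complex.I *
                  (cc * z + ((θ:ℝ):ℂ) * ((t:ℂ) * Complex.I) + bb))) *
              (1 - Complex.exp (2 * Real.pi * Complex.I * ((t:ℂ) * Complex.I)) ^ (n + 1) *
                Complex.exp (-(2 * Real.pi * Complex.I *
                  (cc * z + ((θ:ℝ):ℂ) * ((t:ℂ) * Complex.I) + bb))))))) := by
      rw [Theta]
      linear_combination (Complex.I * Complex.exp (Real.pi * Complex.I * ((t:ℂ) * Complex.I) / 4) *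
        (∏' n : ℕ,
            ((1 - Complex.exp (2 * Real.pi * Complex.I * ((t:ℂ) * Complex.I)) ^ (n + 1)) *
              (1 - Complex.exp (2 * Real.pi * Complex.I * ((t:ℂ) * Complex.I)) ^ (n + 1) *
                Complex.exp (2 * Real.pi * Complex.I *
                  (cc * z + ((θ:ℝ):ℂ) * ((t:ℂ) * Complex.I) + bb))) *
              (1 - Complex.exp (2 * Real.pi * Complex.I * ((t:ℂ) * Complex.I)) ^ (n + 1) *
                Complex.exp (-(2 * Real.pi * Complex.I *
                  (cc * z + ((θ:ℝ):ℂ) * ((t:ℂ) * Complex.I) + bb))))))) * (hhead2 t)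
    calc Theta ((1 - cc) * z - ((θ:ℝ):ℂ) * ((t:ℂ) * Complex.I) - bb) ((t:ℂ) * Complex.I) /
          Theta (cc * z + ((θ:ℝ):ℂ) * ((t:ℂ) * Complex.I) + bb) ((t:ℂ) * Complex.I)
        = (M t * Theta ((1 - cc) * z - ((θ:ℝ):ℂ) * ((t:ℂ) * Complex.I) - bb) ((t:ℂ) * Complex.I)) /
          (M t * Theta (cc * z + ((θ:ℝ):ℂ) * ((t:ℂ) * Complex.I) + bb) ((t:ℂ) * Complex.I)) :=
          (mul_div_mul_left _ _ (hMne t)).symm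
      _ = _ := by rw [ha, hb, mul_div_mul_left _ _ (hCne t)]
  -- assemble the limit
  have hNum : Tendsto (fun t : ℝ =>
      (Complex.exp (-(Real.pi * Complex.I * γ)) * X t - Complex.exp (Real.pi * Complex.I * γ)) *
      (∏' n : ℕ,
        ((1 - Complex.exp (2 * Real.pi * Complex.I * ((t:ℂ) * Complex.I)) ^ (n + 1)) *
          (1 - Complex.exp (2 * Real.pi * Complex.I * ((t:ℂ) * Complex.I)) ^ (n + 1) *
            Complex.exp (2 * Real.pi * Complex.I *
              ((1 - cc) * z - ((θ:ℝ):ℂ) * ((t:ℂ) * Complex.I) - bb))) *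
          (1 - Complex.exp (2 * Real.pi * Complex.I * ((t:ℂ) * Complex.I)) ^ (n + 1) *
            Complex.exp (-(2 * Real.pi * Complex.I *
              ((1 - cc) * z - ((θ:ℝ):ℂ) * ((t:ℂ) * Complex.I) - bb)))))))
      atTop (nhds ((Complex.exp (-(Real.pi * Complex.I * γ)) * E
        - Complex.exp (Real.pi * Complex.I * γ)) * 1)) :=
    ((tendsto_const_nhds.mul hXE).sub tendsto_const_nhds).mul hP1
  have hDen : Tendsto (fun t : ℝ =>
      (Complex.exp (-(Real.pi * Complex.I * β)) - Complex.exp (Real.pi * Complex.I * β) * X t) *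
      (∏' n : ℕ,
        ((1 - Complex.exp (2 * Real.pi * Complex.I * ((t:ℂ) * Complex.I)) ^ (n + 1)) *
          (1 - Complex.exp (2 * Real.pi * Complex.I * ((t:ℂ) * Complex.I)) ^ (n + 1) *
            Complex.exp (2 * Real.pi * Complex.I *
              (cc * z + ((θ:ℝ):ℂ) * ((t:ℂ) * Complex.I) + bb))) *
          (1 - Complex.exp (2 * Real.pi * Complex.I * ((t:ℂ) * Complex.I)) ^ (n + 1) *
            Complex.exp (-(2 * Real.pi * Complex.I *
              (cc * z + ((θ:ℝ):ℂ) * ((t:ℂ) * Complex.I) + bb)))))))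
      atTop (nhds ((Complex.exp (-(Real.pi * Complex.I * β))
        - Complex.exp (Real.pi * Complex.I * β) * E) * 1)) :=
    (tendsto_const_nhds.sub (tendsto_const_nhds.mul hXE)).mul hP2
  have hDenne : (Complex.exp (-(Real.pi * Complex.I * β))
      - Complex.exp (Real.pi * Complex.I * β) * E) * 1 ≠ 0 := by
    rw [mul_one]; exact hLden
  refine ⟨Complex.exp (-(2 * Real.pi * Complex.I * z * ((θ:ℝ):ℂ))) *
    (((Complex.exp (-(Real.pi * Complex.I * γ)) * E - Complex.exp (Real.pi * Complex.I * γ)) * 1) /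
     ((Complex.exp (-(Real.pi * Complex.I * β)) - Complex.exp (Real.pi * Complex.I * β) * E) * 1)), ?_⟩
  have := ((hNum.div hDen hDenne).const_mul
    (Complex.exp (-(2 * Real.pi * Complex.I * z * ((θ:ℝ):ℂ)))))
  exact Tendsto.congr (fun t => (hratio t).symm) this


/-- for fixed `z` with `q_j z + θ_j(n₁) ∉ ℤ` for all `j` and all
`n₁ ∈ G`, the limit of `Ell(W/G, z, it)` as `t → +∞` exists (no negative
powers of `q` at the cusp: `Ell` is a *weak* Jacobi form). -/
theorem Ell_limit_at_cusp
    (d : ℕ) (hd : 1 ≤ d)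
    (A : Matrix (Fin d) (Fin d) ℕ)
    (hA : (A.map (fun a => (a : ℚ))).det ≠ 0)
    (q : Fin d → ℚ)
    (hq : (A.map (fun a => (a : ℚ))).mulVec q = fun _ => 1)
    (hqpos : ∀ j, 0 < q j)
    (G : Finset (Fin d → ℚ))
    (hGrep : ∀ p ∈ G, ∀ j, 0 ≤ p j ∧ p j < 1)
    (hGaut : ∀ p ∈ G, ∀ i, ∃ t : ℤ, ∑ j, (A i j : ℚ) * p j = (t : ℚ))
    (hGzero : (fun _ => 0 : Fin d → ℚ) ∈ G)
    (hGadd : ∀ p ∈ G, ∀ p' ∈ G, (fun j => Int.fract (p j + p' j)) ∈ G)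
    (hGneg : ∀ p ∈ G, (fun j => Int.fract (-(p j))) ∈ G)
    (hJW : (fun j => Int.fract (q j)) ∈ G)
    (hGsum : ∀ p ∈ G, ∃ t : ℤ, ∑ j, p j = (t : ℚ))
    (z : ℂ)
    (hz : ∀ j : Fin d, ∀ n₁ ∈ G, ∀ t : ℤ, (q j : ℂ) * z + (n₁ j : ℂ) ≠ (t : ℂ)) :
    ∃ L : ℂ, Filter.Tendsto (fun t : ℝ => Ell d q G z (t * Complex.I))
      Filter.atTop (nhds L) := by
  classical
  have key : ∀ n ∈ G, ∀ n₁ ∈ G, ∀ j : Fin d, ∃ L : ℂ, Tendsto (fun t : ℝ =>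
      Complex.exp (-(2 * Real.pi * Complex.I * z * ((n j : ℚ) : ℂ))) *
        Theta ((1 - (q j : ℂ)) * z - ((n j : ℚ) : ℂ) * ((t:ℂ) * Complex.I) - ((n₁ j : ℚ) : ℂ))
          ((t:ℂ) * Complex.I) /
        Theta ((q j : ℂ) * z + ((n j : ℚ) : ℂ) * ((t:ℂ) * Complex.I) + ((n₁ j : ℚ) : ℂ))
          ((t:ℂ) * Complex.I))
      atTop (nhds L) := by
    intro n hn n₁ hn₁ j
    have h0 : (0:ℝ) ≤ ((n j : ℚ) : ℝ) := by exact_mod_cast (hGrep n hn j).1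
    have h1 : ((n j : ℚ) : ℝ) < 1 := by exact_mod_cast (hGrep n hn j).2
    have hden : ((n j : ℚ) : ℝ) = 0 →
        Complex.exp (2 * Real.pi * Complex.I * ((q j : ℂ) * z + ((n₁ j : ℚ) : ℂ))) ≠ 1 := by
      intro _ hexp
      obtain ⟨k, hk⟩ := Complex.exp_eq_one_iff.1 hexp
      have h2πI : (2 * (Real.pi:ℂ) * Complex.I) ≠ 0 := by
        simp [Real.pi_ne_zero, Complex.I_ne_zero]
      have hk' : (2 * (Real.pi:ℂ) * Complex.I) * ((q j : ℂ) * z + ((n₁ j : ℚ) : ℂ))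
          = (2 * (Real.pi:ℂ) * Complex.I) * (k : ℂ) := by linear_combination hk
      exact hz j n₁ hn₁ k (mul_left_cancel₀ h2πI hk')
    have := termTendsto z (q j : ℂ) ((n₁ j : ℚ) : ℂ) ((n j : ℚ) : ℝ) h0 h1 hden
    simpa only [Complex.ofReal_ratCast] using this
  choose! L hL using key
  refine ⟨(G.card : ℂ)⁻¹ * ∑ n ∈ G, ∑ n₁ ∈ G, ∏ j : Fin d, L n n₁ j, ?_⟩
  have hsum : Tendsto (fun t : ℝ =>
      ∑ n ∈ G, ∑ n₁ ∈ G, ∏ j : Fin d,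
        Complex.exp (-(2 * Real.pi * Complex.I * z * ((n j : ℚ) : ℂ))) *
          Theta ((1 - (q j : ℂ)) * z - ((n j : ℚ) : ℂ) * ((t:ℂ) * Complex.I) - ((n₁ j : ℚ) : ℂ))
            ((t:ℂ) * Complex.I) /
          Theta ((q j : ℂ) * z + ((n j : ℚ) : ℂ) * ((t:ℂ) * Complex.I) + ((n₁ j : ℚ) : ℂ))
            ((t:ℂ) * Complex.I))
      atTop (nhds (∑ n ∈ G, ∑ n₁ ∈ G, ∏ j : Fin d, L n n₁ j)) := by
    apply tendsto_finset_sum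
    intro n hn
    apply tendsto_finset_sum
    intro n₁ hn₁
    exact tendsto_finset_prod _ fun j _ => hL n hn n₁ hn₁ j
  have := hsum.const_mul ((G.card : ℂ)⁻¹)
  simpa only [Ell] using this
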